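/- The trisectrix limaçon curves rₖ(t) = r(t + (k−1)τ), k = 1,2,3,4, where r(t) = (½(cos ωt + cos 2ωt), ½(sin ωt + sin 2ωt)) and τ = π/(2ω), form a solution of the four-body system, and moreover r₁(t) + r₂(t) + r₃(t) + r₄(t) = 0 for all t ∈ ℝ. In particular the four bodies execute a choreography along the common trisectrix limaçon curve traced by r. -/

import Mathlib

noncomputable section

/-- The Euclidean plane. -/
abbrev Plane : Type := EuclideanSpace ℝ (Fin 2)

/-- A solution of the planar four-body system with pairwise quadratic potential
`V = (mω²/4)(2‖r₁−r₂‖² + 2‖r₂−r₃‖² + 2‖r₃−r₄‖² + 2‖r₁−r₄‖² − ‖r₁−r₃‖² − ‖r₂−r₄‖²)`: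
four twice differentiable curves satisfying Newton's equations
`rᵢ'' = −ω²((rᵢ − r_{i+1}) + (rᵢ − r_{i−1}) − ½(rᵢ − r_{i+2}))` (indices mod 4). -/
def IsFourBodySolution (ω : ℝ) (r₁ r₂ r₃ r₄ : ℝ → Plane) : Prop :=
  (Differentiable ℝ r₁ ∧ Differentiable ℝ (deriv r₁)) ∧
  (Differentiable ℝ r₂ ∧ Differentiable ℝ (deriv r₂)) ∧
  (Differentiable ℝ r₃ ∧ Differentiable ℝ (deriv r₃)) ∧
  (Differentiable ℝ r₄ ∧ Differentiable ℝ (deriv r₄)) ∧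
  (∀ t : ℝ, deriv (deriv r₁) t =
    (-(ω ^ 2)) • ((r₁ t - r₂ t) + (r₁ t - r₄ t) - (1 / 2 : ℝ) • (r₁ t - r₃ t))) ∧
  (∀ t : ℝ, deriv (deriv r₂) t =
    (-(ω ^ 2)) • ((r₂ t - r₃ t) + (r₂ t - r₁ t) - (1 / 2 : ℝ) • (r₂ t - r₄ t))) ∧
  (∀ t : ℝ, deriv (deriv r₃) t =
    (-(ω ^ 2)) • ((r₃ t - r₄ t) + (r₃ t - r₂ t) - (1 / 2 : ℝ) • (r₃ t - r₁ t))) ∧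
  (∀ t : ℝ, deriv (deriv r₄) t =
    (-(ω ^ 2)) • ((r₄ t - r₁ t) + (r₄ t - r₃ t) - (1 / 2 : ℝ) • (r₄ t - r₂ t)))

/-- The trisectrix limaçon curve
`r(t) = (½(cos ωt + cos 2ωt), ½(sin ωt + sin 2ωt))`. -/
def limax (ω : ℝ) : ℝ → Plane := fun t =>
  (WithLp.equiv 2 (Fin 2 → ℝ)).symm
    ![(Real.cos (ω * t) + Real.cos (2 * ω * t)) / 2,
      (Real.sin (ω * t) + Real.sin (2 * ω * t)) / 2]

/-- A pair of real `HasDerivAt` facts gives `HasDerivAt` for the plane curve. -/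
lemma hasDerivAt_plane {f g : ℝ → ℝ} {f' g' t : ℝ} (hf : HasDerivAt f f' t)
    (hg : HasDerivAt g g' t) :
    HasDerivAt (fun s => ((WithLp.equiv 2 (Fin 2 → ℝ)).symm ![f s, g s] : Plane))
      ((WithLp.equiv 2 (Fin 2 → ℝ)).symm ![f', g']) t := by
  have h : HasDerivAt (fun s => (![f s, g s] : Fin 2 → ℝ)) ![f', g'] t := by
    rw [hasDerivAt_pi]
    intro i
    fin_cases i <;> simpa
  exact ((PiLp.continuousLinearEquiv 2 ℝ fun _ : Fin 2 => ℝ).symm.hasFDerivAt.comp_hasDerivAt t h)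

/-- First derivative of the limaçon curve. -/
def limax₁ (ω : ℝ) : ℝ → Plane := fun t =>
  (WithLp.equiv 2 (Fin 2 → ℝ)).symm
    ![(-Real.sin (ω * t) * ω + -Real.sin (2 * ω * t) * (2 * ω)) / 2,
      (Real.cos (ω * t) * ω + Real.cos (2 * ω * t) * (2 * ω)) / 2]

/-- Second derivative of the limaçon curve. -/
def limax₂ (ω : ℝ) : ℝ → Plane := fun t =>
  (WithLp.equiv 2 (Fin 2 → ℝ)).symm
    ![(-(Real.cos (ω * t) * ω) * ω + -(Real.cos (2 * ω * t) * (2 * ω)) * (2 * ω)) / 2,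
      (-Real.sin (ω * t) * ω * ω + -Real.sin (2 * ω * t) * (2 * ω) * (2 * ω)) / 2]

lemma hmul1 (ω : ℝ) (s : ℝ) : HasDerivAt (fun u => ω * u) ω s := by
  simpa using (hasDerivAt_id s).const_mul ω

lemma hmul2 (ω : ℝ) (s : ℝ) : HasDerivAt (fun u => 2 * ω * u) (2 * ω) s := by
  simpa using (hasDerivAt_id s).const_mul (2 * ω)

lemma limax_hasDerivAt (ω t : ℝ) : HasDerivAt (limax ω) (limax₁ ω t) t := by
  apply hasDerivAt_plane
  · simpa [Function.comp] using (((Real.hasDerivAt_cos (ω * t)).comp t (hmul1 ω t)).add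
      ((Real.hasDerivAt_cos (2 * ω * t)).comp t (hmul2 ω t))).div_const 2
  · simpa [Function.comp] using (((Real.hasDerivAt_sin (ω * t)).comp t (hmul1 ω t)).add
      ((Real.hasDerivAt_sin (2 * ω * t)).comp t (hmul2 ω t))).div_const 2

lemma limax₁_hasDerivAt (ω t : ℝ) : HasDerivAt (limax₁ ω) (limax₂ ω t) t := by
  apply hasDerivAt_plane
  · have A := (((((Real.hasDerivAt_sin (ω * t)).comp t (hmul1 ω t)).mul_const ω).add
      (((Real.hasDerivAt_sin (2 * ω * t)).comp t (hmul2 ω t)).mul_const (2 * ω))).div_const 2).neg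
    simp only [Function.comp] at A
    refine (A.congr_deriv ?_).congr_of_eventuallyEq (Filter.Eventually.of_forall fun s => ?_)
    · ring
    · simp only [Pi.neg_apply, Pi.add_apply]; ring
  · simpa [Function.comp] using ((((Real.hasDerivAt_cos (ω * t)).comp t (hmul1 ω t)).mul_const ω).add
      (((Real.hasDerivAt_cos (2 * ω * t)).comp t (hmul2 ω t)).mul_const (2 * ω))).div_const 2

lemma shift_hasDerivAt {F G : ℝ → Plane} (h : ∀ s, HasDerivAt F (G s) s) (a t : ℝ) :
    HasDerivAt (fun s => F (s + a)) (G (t + a)) t := by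
  have := (h (t + a)).scomp t ((hasDerivAt_id t).add_const a)
  rw [one_smul] at this
  exact this

lemma deriv_shift {F G : ℝ → Plane} (h : ∀ s, HasDerivAt F (G s) s) (a : ℝ) :
    deriv (fun s => F (s + a)) = fun s => G (s + a) :=
  funext fun t => (shift_hasDerivAt h a t).deriv

set_option maxHeartbeats 1000000 in
/-- The time-shifted trisectrix limaçon curves `rₖ(t) = r(t + (k−1)τ)`,
`τ = π/(2ω)`, form a solution of the four-body system whose sum vanishes identically:
a four-body choreography along the trisectrix limaçon. -/
theorem limax_is_choreographic_solution (m ω : ℝ) (hm : 0 < m) (hω : 0 < ω) :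
    IsFourBodySolution ω
      (fun t => limax ω t)
      (fun t => limax ω (t + Real.pi / (2 * ω)))
      (fun t => limax ω (t + 2 * (Real.pi / (2 * ω))))
      (fun t => limax ω (t + 3 * (Real.pi / (2 * ω))))
    ∧ ∀ t : ℝ,
      limax ω t + limax ω (t + Real.pi / (2 * ω))
        + limax ω (t + 2 * (Real.pi / (2 * ω)))
        + limax ω (t + 3 * (Real.pi / (2 * ω))) = 0 := by
  have hω' : ω ≠ 0 := hω.ne'
  -- normalized arguments
  have e1 : ∀ t : ℝ, ω * (t + Real.pi / (2 * ω)) = ω * t + Real.pi / 2 := by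
    intro t; field_simp
  have e2 : ∀ t : ℝ, ω * (t + 2 * (Real.pi / (2 * ω))) = ω * t + Real.pi := by
    intro t; field_simp
  have e3 : ∀ t : ℝ, ω * (t + 3 * (Real.pi / (2 * ω))) = ω * t + (Real.pi + Real.pi / 2) := by
    intro t; field_simp; ring
  have f1 : ∀ t : ℝ, 2 * ω * (t + Real.pi / (2 * ω)) = 2 * ω * t + Real.pi := by
    intro t; field_simp
  have f2 : ∀ t : ℝ, 2 * ω * (t + 2 * (Real.pi / (2 * ω))) = 2 * ω * t + (Real.pi + Real.pi) := by
    intro t; field_simp; ring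
  have f3 : ∀ t : ℝ,
      2 * ω * (t + 3 * (Real.pi / (2 * ω))) = 2 * ω * t + (Real.pi + (Real.pi + Real.pi)) := by
    intro t; field_simp; ring
  -- derivatives of the shifted curves
  have d1 : ∀ a t : ℝ, HasDerivAt (fun s => limax ω (s + a)) (limax₁ ω (t + a)) t :=
    fun a t => shift_hasDerivAt (limax_hasDerivAt ω) a t
  have d2 : ∀ a : ℝ, deriv (fun s => limax ω (s + a)) = fun s => limax₁ ω (s + a) :=
    fun a => deriv_shift (limax_hasDerivAt ω) a
  have d3 : ∀ a t : ℝ, HasDerivAt (fun s => limax₁ ω (s + a)) (limax₂ ω (t + a)) t :=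
    fun a t => shift_hasDerivAt (limax₁_hasDerivAt ω) a t
  have d4 : ∀ a : ℝ, deriv (fun s => limax₁ ω (s + a)) = fun s => limax₂ ω (s + a) :=
    fun a => deriv_shift (limax₁_hasDerivAt ω) a
  have diff : ∀ a : ℝ,
      Differentiable ℝ (fun s => limax ω (s + a)) ∧
        Differentiable ℝ (deriv (fun s => limax ω (s + a))) := by
    intro a
    refine ⟨fun t => (d1 a t).differentiableAt, ?_⟩
    rw [d2 a]
    exact fun t => (d3 a t).differentiableAt
  have dd : ∀ a : ℝ, deriv (deriv (fun s => limax ω (s + a))) = fun s => limax₂ ω (s + a) := by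
    intro a
    rw [d2 a, d4 a]
  have h0 : ∀ g : ℝ → Plane, g = (fun s => g (s + 0)) := by
    intro g; funext s; rw [add_zero]
  -- rewrite the four curves in shifted form
  have key0 : (fun t => limax ω t) = fun s => limax ω (s + 0) := h0 _
  constructor
  · refine ⟨?_, ?_, ?_, ?_, ?_, ?_, ?_, ?_⟩
    · rw [key0]; exact diff 0
    · exact diff _
    · exact diff _
    · exact diff _
    all_goals
      intro t
      first
        | rw [key0, dd]
        | rw [dd]
      ext i
      fin_cases i <;>
        · simp [limax, limax₂, add_zero, e1, e2, e3, f1, f2, f3,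
            Real.cos_add, Real.sin_add]
          ring
  · intro t
    ext i
    fin_cases i <;>
      · simp [limax, e1, e2, e3, f1, f2, f3, Real.cos_add, Real.sin_add]
        ring
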